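/- Suppose B = I − P A is invertible and its operator 2-norm satisfies ‖B‖ < 1. Let α ∈ ℝ^{m_k} minimize ‖r_k + Σ_{i=1}^{m_k} α_i (r_k − r_{k−i})‖ over all α ∈ ℝ^{m_k} (the AA least-squares problem), define x_{k+1} = q(x_k) + Σ_{i=1}^{m_k} α_i (q(x_k) − q(x_{k−i})) and r_{k+1} = r(x_{k+1}), and assume r_k ≠ 0. Then ‖r_{k+1}‖ < ‖r_k‖. -/

import Mathlib

open scoped RealInnerProductSpace

/-- Matrix-vector multiplication on Euclidean space. -/
noncomputable def mulV {n : ℕ} (M : Matrix (Fin n) (Fin n) ℝ)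
    (v : EuclideanSpace ℝ (Fin n)) : EuclideanSpace ℝ (Fin n) :=
  Matrix.toEuclideanLin M v

open scoped Matrix.Norms.L2Operator

lemma mulV_mul {n : ℕ} (M N : Matrix (Fin n) (Fin n) ℝ) (v : EuclideanSpace ℝ (Fin n)) :
    mulV (M * N) v = mulV M (mulV N v) := by
  simp [mulV, Matrix.toEuclideanLin_apply, Matrix.mulVec_mulVec]

lemma mulV_one {n : ℕ} (v : EuclideanSpace ℝ (Fin n)) : mulV 1 v = v := by
  simp [mulV, Matrix.toEuclideanLin_apply]

lemma mulV_matsub {n : ℕ} (M N : Matrix (Fin n) (Fin n) ℝ) (v : EuclideanSpace ℝ (Fin n)) :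
    mulV (M - N) v = mulV M v - mulV N v := by
  simp [mulV, Matrix.toEuclideanLin_apply, Matrix.sub_mulVec]

lemma mulV_add {n : ℕ} (M : Matrix (Fin n) (Fin n) ℝ) (u v : EuclideanSpace ℝ (Fin n)) :
    mulV M (u + v) = mulV M u + mulV M v :=
  map_add (Matrix.toEuclideanLin M) u v

lemma mulV_sub {n : ℕ} (M : Matrix (Fin n) (Fin n) ℝ) (u v : EuclideanSpace ℝ (Fin n)) :
    mulV M (u - v) = mulV M u - mulV M v :=
  map_sub (Matrix.toEuclideanLin M) u v

lemma mulV_smul {n : ℕ} (M : Matrix (Fin n) (Fin n) ℝ) (c : ℝ) (v : EuclideanSpace ℝ (Fin n)) :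
    mulV M (c • v) = c • mulV M v :=
  map_smul (Matrix.toEuclideanLin M) c v

lemma mulV_sum {n : ℕ} (M : Matrix (Fin n) (Fin n) ℝ) {ι : Type*} (s : Finset ι)
    (f : ι → EuclideanSpace ℝ (Fin n)) :
    mulV M (∑ i ∈ s, f i) = ∑ i ∈ s, mulV M (f i) :=
  map_sum (Matrix.toEuclideanLin M) f s

lemma mulV_norm_le {n : ℕ} (M : Matrix (Fin n) (Fin n) ℝ) (v : EuclideanSpace ℝ (Fin n)) :
    ‖mulV M v‖ ≤ ‖M‖ * ‖v‖ := by
  simpa [mulV, Matrix.toEuclideanLin_apply] using M.l2_opNorm_mulVec v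

/-- strict decrease of the AA preconditioned residual when ‖B‖ < 1. -/
theorem stmt_3 {n : ℕ} (A P : Matrix (Fin n) (Fin n) ℝ)
    (hA : IsUnit A.det) (hP : IsUnit P.det)
    (b : EuclideanSpace ℝ (Fin n))
    (q r : EuclideanSpace ℝ (Fin n) → EuclideanSpace ℝ (Fin n))
    (hq : ∀ y, q y = y + mulV P (b - mulV A y))
    (hr : ∀ y, r y = y - q y)
    (B : Matrix (Fin n) (Fin n) ℝ) (hB : B = 1 - P * A)
    (hBdet : IsUnit B.det) (hBnorm : ‖B‖ < 1)
    (k m : ℕ) (hm : m ≤ k)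
    (x : ℕ → EuclideanSpace ℝ (Fin n))
    (α : ℕ → ℝ)
    (hopt : ∀ a : ℕ → ℝ,
      ‖r (x k) + ∑ i ∈ Finset.Icc 1 m, α i • (r (x k) - r (x (k - i)))‖ ≤
      ‖r (x k) + ∑ i ∈ Finset.Icc 1 m, a i • (r (x k) - r (x (k - i)))‖)
    (xk1 rk1 : EuclideanSpace ℝ (Fin n))
    (hx : xk1 = q (x k) + ∑ i ∈ Finset.Icc 1 m, α i • (q (x k) - q (x (k - i))))
    (hrk1 : rk1 = r xk1)
    (hrk : r (x k) ≠ 0) :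
    ‖rk1‖ < ‖r (x k)‖ := by
  -- r is affine: r y = (P*A) y - P b
  have h1 : ∀ y, r y = mulV (P * A) y - mulV P b := by
    intro y
    rw [hr y, hq y, mulV_sub, mulV_mul]
    abel
  -- residual after one Richardson step: r (q y) = B (r y)
  have h2 : ∀ y, r (q y) = mulV B (r y) := by
    intro y
    rw [h1 (q y), h1 y, hq y, hB]
    simp only [mulV_matsub, mulV_one, mulV_add, mulV_sub, mulV_mul, mulV_smul]
    abel
  set v := r (x k) + ∑ i ∈ Finset.Icc 1 m, α i • (r (x k) - r (x (k - i))) with hv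
  -- key identity : r xk1 = B v
  have hkey : r xk1 = mulV B v := by
    rw [h1 xk1, hx, mulV_add, mulV_sum, hv, mulV_add, mulV_sum]
    have hterm : ∀ i ∈ Finset.Icc 1 m,
        mulV (P * A) (α i • (q (x k) - q (x (k - i)))) =
        mulV B (α i • (r (x k) - r (x (k - i)))) := by
      intro i _
      rw [mulV_smul, mulV_smul, mulV_sub, mulV_sub, ← h2, ← h2, h1 (q (x k)),
        h1 (q (x (k - i)))]
      congr 1
      abel
    rw [Finset.sum_congr rfl hterm, ← h2, h1 (q (x k))]
    abel
  -- optimality with a = 0 gives ‖v‖ ≤ ‖r (x k)‖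
  have hv1 : ‖v‖ ≤ ‖r (x k)‖ := by
    simpa using hopt (fun _ => 0)
  have hrkpos : 0 < ‖r (x k)‖ := norm_pos_iff.mpr hrk
  calc ‖rk1‖ = ‖mulV B v‖ := by rw [hrk1, hkey]
    _ ≤ ‖B‖ * ‖v‖ := mulV_norm_le B v
    _ ≤ ‖B‖ * ‖r (x k)‖ := mul_le_mul_of_nonneg_left hv1 (norm_nonneg _)
    _ < 1 * ‖r (x k)‖ := by exact mul_lt_mul_of_pos_right hBnorm hrkpos
    _ = ‖r (x k)‖ := one_mul _
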